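/- arXiv:2203.01048 — 2 statements merged into one kernel-verified Lean document; each statement's English description precedes it below -/
import Mathlib

section
/- Let Ã₁ and Ã₂ be LR-type IVIFNs satisfying the validity conditions. Then the subtraction tuple (a₁−a₂; l_{1L}^μ+r_{2L}^μ, r_{1L}^μ+l_{2L}^μ, l'_{1U}^μ+r'_{2U}^μ, r'_{1U}^μ+l'_{2U}^μ; l_{1L}^ν+r_{2L}^ν, r_{1L}^ν+l_{2L}^ν, l'_{1U}^ν+r'_{2U}^ν, r'_{1U}^ν+l'_{2U}^ν) also satisfies the validity conditions of an LR-type IVIFN. -/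
/-- Validity conditions on the spreads of an LR-type IVIFN. -/
def IsValidIVIFN (lLμ rLμ lUμ rUμ lLν rLν lUν rUν : ℝ) : Prop :=
  0 < lLμ ∧ 0 < rLμ ∧ 0 < lUμ ∧ 0 < rUμ ∧ 0 < lLν ∧ 0 < rLν ∧ 0 < lUν ∧ 0 < rUν ∧
  lLμ ≤ lUμ ∧ rLμ ≤ rUμ ∧ lUν ≤ lLν ∧ rUν ≤ rLν ∧
  lLμ ≤ lLν ∧ rLμ ≤ rLν ∧ lUμ ≤ lUν ∧ rUμ ≤ rUν

/-- The subtraction tuple of two valid LR-type IVIFNs is a valid LR-type IVIFN. -/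
theorem sub_IVIFN_valid
    (lLμ₁ rLμ₁ lUμ₁ rUμ₁ lLν₁ rLν₁ lUν₁ rUν₁ : ℝ)
    (lLμ₂ rLμ₂ lUμ₂ rUμ₂ lLν₂ rLν₂ lUν₂ rUν₂ : ℝ)
    (h₁ : IsValidIVIFN lLμ₁ rLμ₁ lUμ₁ rUμ₁ lLν₁ rLν₁ lUν₁ rUν₁)
    (h₂ : IsValidIVIFN lLμ₂ rLμ₂ lUμ₂ rUμ₂ lLν₂ rLν₂ lUν₂ rUν₂) :
    IsValidIVIFN (lLμ₁ + rLμ₂) (rLμ₁ + lLμ₂) (lUμ₁ + rUμ₂) (rUμ₁ + lUμ₂)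
      (lLν₁ + rLν₂) (rLν₁ + lLν₂) (lUν₁ + rUν₂) (rUν₁ + lUν₂) := by
  obtain ⟨a,b,c,d,e,f,g,h,i,j,k,l,m,n,o,p⟩ := h₁
  obtain ⟨a2,b2,c2,d2,e2,f2,g2,h2,i2,j2,k2,l2,m2,n2,o2,p2⟩ := h₂
  refine ⟨by linarith, by linarith, by linarith, by linarith, by linarith, by linarith, by linarith, by linarith, by linarith, by linarith, by linarith, by linarith, by linarith, by linarith, by linarith, by linarith⟩
end

section
/- If binary variables z₁,…,z₇ ∈ {0,1} with z₁ ≤ z₂ ≤ ⋯ ≤ z₇ and real numbers d₁,…,d₇ satisfy k·z₁ ≤ d₁ ≤ K·z₁ and for each i ≥ 2, −K(z₁+⋯+z_{i−1}) + k·z_i ≤ d_i ≤ K·z_i (with 0 < k ≤ K), then the vector (d₁,…,d₇) is lexicographically ≥ the zero vector of ℝ⁷. -/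
/-- A vector of `ℝⁿ` is lexicographically ≥ 0 iff it is zero or its first
nonzero component is positive. -/
def LexNonneg {n : ℕ} (d : Fin n → ℝ) : Prop :=
  d = 0 ∨ ∃ i : Fin n, (∀ j : Fin n, j < i → d j = 0) ∧ 0 < d i

/-- If binary variables `z₁ ≤ ⋯ ≤ z₇` and reals `d₁,…,d₇` satisfy the big-M
constraints, then `(d₁,…,d₇)` is lexicographically ≥ the zero vector. -/
theorem bigM_constraints_imply_lex_nonneg (k K : ℝ) (hk : 0 < k) (hkK : k ≤ K)
    (z d : Fin 7 → ℝ)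
    (hbin : ∀ i, z i = 0 ∨ z i = 1)
    (hmono : ∀ i j : Fin 7, i ≤ j → z i ≤ z j)
    (h0 : k * z 0 ≤ d 0 ∧ d 0 ≤ K * z 0)
    (hi : ∀ i : Fin 7, 0 < i →
      -K * (∑ j ∈ Finset.Iio i, z j) + k * z i ≤ d i ∧ d i ≤ K * z i) :
    LexNonneg d := by
  classical
  -- key: if z j = 0 for all j ≤ i, then d i = 0
  have key : ∀ i : Fin 7, (∀ j : Fin 7, j ≤ i → z j = 0) → d i = 0 := by
    intro i hall
    rcases eq_or_lt_of_le (Fin.zero_le i) with h | h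
    · have hz : z 0 = 0 := hall 0 (Fin.zero_le i)
      rw [← h]
      have h1 := h0.1; have h2 := h0.2
      rw [hz] at h1 h2
      linarith
    · obtain ⟨h1, h2⟩ := hi i h
      have hsum : (∑ j ∈ Finset.Iio i, z j) = 0 :=
        Finset.sum_eq_zero fun j hj => hall j (le_of_lt (Finset.mem_Iio.mp hj))
      have hz : z i = 0 := hall i le_rfl
      rw [hsum, hz] at h1
      rw [hz] at h2
      linarith
  by_cases hall : ∀ i, z i = 0
  · left
    funext i
    exact key i fun j _ => hall j
  · push_neg at hall
    obtain ⟨i0, hi0⟩ := hall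
    obtain ⟨i, hi1, hmin⟩ := (Finset.univ.filter fun i => z i ≠ 0).exists_min_image id
      ⟨i0, Finset.mem_filter.mpr ⟨Finset.mem_univ _, hi0⟩⟩
    have hzi : z i ≠ 0 := (Finset.mem_filter.mp hi1).2
    have hzero : ∀ j : Fin 7, j < i → z j = 0 := by
      intro j hj
      by_contra hne
      exact absurd (hmin j (Finset.mem_filter.mpr ⟨Finset.mem_univ _, hne⟩)) (not_le.mpr hj)
    have hzi1 : z i = 1 := (hbin i).resolve_left hzi
    right
    refine ⟨i, fun j hj => key j fun m hm => hzero m (lt_of_le_of_lt hm hj), ?_⟩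
    rcases eq_or_lt_of_le (Fin.zero_le i) with h | h
    · have h1 := h0.1
      rw [← h] at hzi1 ⊢
      rw [hzi1] at h1
      linarith
    · obtain ⟨h1, _⟩ := hi i h
      have hsum : (∑ j ∈ Finset.Iio i, z j) = 0 :=
        Finset.sum_eq_zero fun j hj => hzero j (Finset.mem_Iio.mp hj)
      rw [hsum, hzi1] at h1
      linarith
end
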